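/- Let G be a finite simple graph with degeneracy at most κ, where κ ≥ 1. Then the edge set of G can be partitioned into at most κ subsets each of which forms an acyclic subgraph (a forest). -/

import Mathlib

open SimpleGraph

private lemma walk_support_getElem {V : Type*} {G : SimpleGraph V} {u v : V}
    (p : G.Walk u v) (i : ℕ) (hi : i < p.support.length) :
    p.support[i] = p.getVert i := by
  induction p generalizing i with
  | nil =>
    have : i = 0 := by simpa using hi
    subst this; simp
  | cons h q ih =>
    cases i with
    | zero => simp
    | succ j =>
      simp only [Walk.support_cons, List.getElem_cons_succ, Walk.getVert_cons_succ]
      exact ih j (by simpa [Walk.length_support] using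
        (by simpa [Walk.support_cons, Walk.length_support] using hi : j + 1 < q.length + 2))

private lemma acyclic_of_unique_up {V : Type*} [DecidableEq V] (H : SimpleGraph V) (f : V → ℕ)
    (hf : Function.Injective f)
    (h1 : ∀ v w w', H.Adj v w → H.Adj v w' → f v < f w → f v < f w' → w = w') :
    H.IsAcyclic := by
  intro v c hc
  obtain ⟨u, huT, hmin⟩ := c.support.toFinset.exists_min_image f
    ⟨v, by simp [Walk.start_mem_support]⟩
  rw [List.mem_toFinset] at huT
  set c' := c.rotate u huT with hc'def
  have hc' : c'.IsCycle := hc.rotate huT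
  set n := c'.length with hn
  have hn3 : 3 ≤ n := hc'.three_le_length
  -- every vertex of c' has f-value ≥ f u
  have hmem : ∀ x, x ∈ c'.support → f u ≤ f x := by
    intro x hx
    rcases List.mem_cons.mp (by rw [← c'.support_eq_cons] ; exact hx) with rfl | hx'
    · exact le_refl _
    · have : x ∈ c.support.tail := (Walk.support_rotate c u huT).mem_iff.mp hx'
      exact hmin x (List.mem_toFinset.mpr (List.mem_of_mem_tail this))
  set b := c'.getVert 1 with hb
  set a := c'.getVert (n - 1) with ha
  have hub : H.Adj u b := by
    have := c'.adj_getVert_succ (i := 0) (by omega)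
    simpa [Walk.getVert_zero] using this
  have hua : H.Adj u a := by
    have := c'.adj_getVert_succ (i := n - 1) (by omega)
    rw [show n - 1 + 1 = n by omega] at this
    have h2 : c'.getVert n = u := by rw [hn]; exact c'.getVert_length
    rw [h2] at this
    exact this.symm
  have hbmem : b ∈ c'.support := Walk.mem_support_iff_exists_getVert.mpr ⟨1, rfl, by omega⟩
  have hamem : a ∈ c'.support := Walk.mem_support_iff_exists_getVert.mpr ⟨n - 1, rfl, by omega⟩
  have hfb : f u < f b := lt_of_le_of_ne (hmem b hbmem) (fun h => hub.ne (hf h))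
  have hfa : f u < f a := lt_of_le_of_ne (hmem a hamem) (fun h => hua.ne (hf h))
  have hab : a ≠ b := by
    intro h
    have hnd : c'.support.tail.Nodup := hc'.2
    have hlen : c'.support.tail.length = n := by
      have := c'.length_support
      simp only [List.length_tail, this]
      omega
    have e1 : c'.support.tail[(0 : ℕ)]'(by omega) = b := by
      rw [List.getElem_tail, walk_support_getElem]
    have e2 : c'.support.tail[n - 2]'(by omega) = a := by
      rw [List.getElem_tail, walk_support_getElem, show n - 2 + 1 = n - 1 by omega]
    have : (0 : ℕ) = n - 2 := by
      have := (hnd.getElem_inj_iff (i := 0) (j := n - 2)).mp (by rw [e1, e2, h])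
      exact this
    omega
  exact hab (h1 u a b hua hub hfa hfb)

/-- If a finite simple graph `G` has degeneracy at most `κ` (with `κ ≥ 1`), then its
edge set can be partitioned into (at most) `κ` subsets each of which forms a forest
(an acyclic subgraph). -/
theorem forest_partition_of_degeneracy_le
    {V : Type*} [Fintype V] [DecidableEq V] (G : SimpleGraph V) [DecidableRel G.Adj]
    (κ : ℕ) (hκ : 1 ≤ κ)
    (hdeg : ∀ S : Finset V, S.Nonempty →
      ∃ v ∈ S, (S.filter (fun w => G.Adj v w)).card ≤ κ) :
    ∃ F : Fin κ → SimpleGraph V,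
      (∀ i, F i ≤ G) ∧ (∀ i, (F i).IsAcyclic) ∧
        ∀ u v : V, G.Adj u v → ∃! i, (F i).Adj u v := by
  classical
  -- Step 1: a degeneracy ordering
  have rank_aux : ∀ S : Finset V, ∃ f : V → ℕ, Set.InjOn f S ∧
      ∀ v ∈ S, (S.filter (fun w => G.Adj v w ∧ f v < f w)).card ≤ κ := by
    intro S
    induction S using Finset.strongInduction with
    | _ S ih =>
      rcases S.eq_empty_or_nonempty with rfl | hS
      · exact ⟨fun _ => 0, by simp, by simp⟩
      obtain ⟨v, hv, hvcard⟩ := hdeg S hS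
      obtain ⟨f, hfinj, hf⟩ := ih (S.erase v) (Finset.erase_ssubset hv)
      refine ⟨fun w => if w = v then 0 else f w + 1, ?_, ?_⟩
      · intro x hx y hy hxy
        by_cases hxv : x = v
        · by_cases hyv : y = v
          · rw [hxv, hyv]
          · simp [hxv, hyv] at hxy
        · by_cases hyv : y = v
          · simp [hxv, hyv] at hxy
          · have hfe : f x = f y := by simpa [hxv, hyv] using hxy
            exact hfinj (Finset.mem_coe.mpr (Finset.mem_erase.mpr ⟨hxv, Finset.mem_coe.mp hx⟩))
              (Finset.mem_coe.mpr (Finset.mem_erase.mpr ⟨hyv, Finset.mem_coe.mp hy⟩)) hfe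
      · intro w hw
        by_cases hwv : w = v
        · subst hwv
          refine le_trans (Finset.card_le_card ?_) hvcard
          intro u hu
          simp only [Finset.mem_filter] at hu ⊢
          exact ⟨hu.1, hu.2.1⟩
        · refine le_trans (Finset.card_le_card ?_) (hf w (Finset.mem_erase.mpr ⟨hwv, hw⟩))
          intro u hu
          simp only [Finset.mem_filter, Finset.mem_erase] at hu ⊢
          obtain ⟨huS, hadj, hlt⟩ := hu
          by_cases huv : u = v
          · subst huv; simp [hwv] at hlt
          · simp only [hwv, if_false, huv] at hlt
            exact ⟨⟨huv, huS⟩, hadj, by omega⟩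
  obtain ⟨f, hfinj, hf⟩ := rank_aux Finset.univ
  have hfinj' : Function.Injective f := fun x y h =>
    hfinj (Finset.mem_coe.mpr (Finset.mem_univ x)) (Finset.mem_coe.mpr (Finset.mem_univ y)) h
  -- up-neighborhoods
  set N : V → Finset V := fun v => Finset.univ.filter (fun w => G.Adj v w ∧ f v < f w) with hN
  have hNcard : ∀ v, (N v).card ≤ κ := fun v => hf v (Finset.mem_univ v)
  -- Step 2: coloring
  set col : V → V → Fin κ := fun v w =>
    if h : w ∈ N v then Fin.castLE (hNcard v) ((N v).equivFin ⟨w, h⟩) else ⟨0, hκ⟩ with hcol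
  have hcolinj : ∀ v w w', w ∈ N v → w' ∈ N v → col v w = col v w' → w = w' := by
    intro v w w' hw hw' h
    simp only [hcol, dif_pos hw, dif_pos hw'] at h
    have := (N v).equivFin.injective (Fin.castLE_injective _ h)
    exact Subtype.ext_iff.mp this
  -- Step 3: the forests
  set F : Fin κ → SimpleGraph V := fun i =>
    SimpleGraph.fromRel (fun x y => G.Adj x y ∧ f x < f y ∧ col x y = i) with hF
  have hFadj : ∀ i x y, (F i).Adj x y ↔ x ≠ y ∧
      ((G.Adj x y ∧ f x < f y ∧ col x y = i) ∨ (G.Adj y x ∧ f y < f x ∧ col y x = i)) := by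
    intro i x y; rfl
  refine ⟨F, ?_, ?_, ?_⟩
  · intro i x y hxy
    rw [hFadj] at hxy
    rcases hxy.2 with ⟨h, _⟩ | ⟨h, _⟩
    · exact h
    · exact h.symm
  · intro i
    refine acyclic_of_unique_up (F i) f hfinj' ?_
    intro v w w' hw hw' hlt hlt'
    rw [hFadj] at hw hw'
    have hr : G.Adj v w ∧ f v < f w ∧ col v w = i := by
      rcases hw.2 with h | h
      · exact h
      · omega
    have hr' : G.Adj v w' ∧ f v < f w' ∧ col v w' = i := by
      rcases hw'.2 with h | h
      · exact h
      · omega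
    refine hcolinj v w w' ?_ ?_ (hr.2.2.trans hr'.2.2.symm)
    · simp [hN, hr.1, hr.2.1]
    · simp [hN, hr'.1, hr'.2.1]
  · intro u v huv
    have hne : u ≠ v := huv.ne
    have hfne : f u ≠ f v := fun h => hne (hfinj' h)
    rcases lt_or_gt_of_ne hfne with hlt | hlt
    · refine ⟨col u v, ?_, ?_⟩
      · show (F (col u v)).Adj u v
        rw [hFadj]; exact ⟨hne, Or.inl ⟨huv, hlt, rfl⟩⟩
      · intro j hj
        rw [hFadj] at hj
        rcases hj.2 with h | h
        · exact h.2.2.symm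
        · omega
    · refine ⟨col v u, ?_, ?_⟩
      · show (F (col v u)).Adj u v
        rw [hFadj]; exact ⟨hne, Or.inr ⟨huv.symm, hlt, rfl⟩⟩
      · intro j hj
        rw [hFadj] at hj
        rcases hj.2 with h | h
        · omega
        · exact h.2.2.symm
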